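/- Let g ∈ L²(ℝ) generate a Gabor frame (g, a=1, b=1) with Zak transform Zg satisfying |Zg(t,ν)|² < 2 for almost all (t,ν). Define Γ₀ = Zg and Γ_{k+1} = 2Γ_k − |Γ_k|²·Zg pointwise. Then Γ_k(t,ν) converges to 1/conj(Zg(t,ν)) for almost all (t,ν); more precisely, writing z_k = Γ_k·conj(Zg), one has 1 − z_{k+1} = (1 − z_k)² wherever defined, so convergence holds pointwise whenever 0 < |Zg|² < 2. Conversely, if |Zg(t,ν)|² > 2 on a set of positive measure, the recursion diverges there. -/

import Mathlib

open Filter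

/-- Zak-domain form of dual iteration IV at critical density: `G` plays the role of
the Zak transform `Zg`, and `Γ_{k+1} = 2Γ_k − |Γ_k|²·G` pointwise.  Writing
`z_k = Γ_k · conj G`, one has `1 − z_{k+1} = (1 − z_k)²`; the recursion converges
pointwise to `1/conj(G)` wherever `0 < |G|² < 2`, and diverges wherever `|G|² > 2`. -/
theorem stmt12 (G : ℝ × ℝ → ℂ) (Γ : ℕ → ℝ × ℝ → ℂ)
    (h0 : Γ 0 = G)
    (hrec : ∀ k p, Γ (k + 1) p = 2 * Γ k p - (‖Γ k p‖ : ℂ) ^ 2 * G p) :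
    (∀ k p, 1 - Γ (k + 1) p * starRingEnd ℂ (G p) =
        (1 - Γ k p * starRingEnd ℂ (G p)) ^ 2) ∧
    (∀ p, 0 < ‖G p‖ ^ 2 → ‖G p‖ ^ 2 < 2 →
      Tendsto (fun k => Γ k p) atTop (nhds (starRingEnd ℂ (G p))⁻¹)) ∧
    (∀ p, 2 < ‖G p‖ ^ 2 →
      Tendsto (fun k => ‖Γ k p‖) atTop atTop) := by
  -- every iterate is a real multiple of G
  have key : ∀ k p, ∃ c : ℝ, Γ k p = (c : ℂ) * G p := by
    intro k p
    induction k with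
    | zero => exact ⟨1, by simp [h0]⟩
    | succ n ih =>
      obtain ⟨c, hc⟩ := ih
      refine ⟨2 * c - c ^ 2 * ‖G p‖ ^ 2, ?_⟩
      rw [hrec, hc]
      have habs : ‖(c : ℂ) * G p‖ = |c| * ‖G p‖ := by
        simp [map_mul, Complex.norm_real]
      rw [habs]
      push_cast
      rw [mul_pow]
      have : ((|c| : ℝ) : ℂ) ^ 2 = ((c : ℝ) : ℂ) ^ 2 := by
        rw [← Complex.ofReal_pow, ← Complex.ofReal_pow, sq_abs]
      rw [this]
      ring
  have hGconj : ∀ p, G p * starRingEnd ℂ (G p) = ((‖G p‖ ^ 2 : ℝ) : ℂ) := by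
    intro p
    rw [Complex.mul_conj]
    norm_cast
    rw [Complex.sq_norm]
  -- part 1
  have part1 : ∀ k p, 1 - Γ (k + 1) p * starRingEnd ℂ (G p) =
      (1 - Γ k p * starRingEnd ℂ (G p)) ^ 2 := by
    intro k p
    obtain ⟨c, hc⟩ := key k p
    rw [hrec, hc]
    have habs : ‖(c : ℂ) * G p‖ = |c| * ‖G p‖ := by
      simp [map_mul, Complex.norm_real]
    rw [habs]
    have h1 : ((|c| * ‖G p‖ : ℝ) : ℂ) ^ 2
        = (c : ℂ) ^ 2 * ((‖G p‖ ^ 2 : ℝ) : ℂ) := by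
      push_cast
      rw [mul_pow]
      congr 1
      norm_cast
      exact sq_abs c
    rw [h1]
    have h2 := hGconj p
    set r : ℂ := ((‖G p‖ ^ 2 : ℝ) : ℂ) with hr
    calc 1 - (2 * ((c : ℂ) * G p) - (c : ℂ) ^ 2 * r * G p) * starRingEnd ℂ (G p)
        = 1 - 2 * (c : ℂ) * (G p * starRingEnd ℂ (G p))
          + (c : ℂ) ^ 2 * r * (G p * starRingEnd ℂ (G p)) := by ring
      _ = 1 - 2 * (c : ℂ) * r + (c : ℂ) ^ 2 * r * r := by rw [h2]
      _ = (1 - (c : ℂ) * r) ^ 2 := by ring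
      _ = (1 - (c : ℂ) * (G p * starRingEnd ℂ (G p))) ^ 2 := by rw [h2]
      _ = (1 - (c : ℂ) * G p * starRingEnd ℂ (G p)) ^ 2 := by ring
  refine ⟨part1, ?_, ?_⟩
  all_goals intro p
  -- closed form for z_k
  · intro hpos hlt
    set r : ℝ := ‖G p‖ ^ 2 with hrdef
    have hz : ∀ k, Γ k p * starRingEnd ℂ (G p) = ((1 - (1 - r) ^ 2 ^ k : ℝ) : ℂ) := by
      intro k
      induction k with
      | zero => rw [h0, hGconj p, ← hrdef]; push_cast; ring
      | succ n ih =>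
        have := part1 n p
        have h' : 1 - Γ (n + 1) p * starRingEnd ℂ (G p)
            = (((1 - r) ^ 2 ^ n : ℝ) : ℂ) ^ 2 := by
          rw [this, ih]; push_cast; ring
        have : Γ (n + 1) p * starRingEnd ℂ (G p)
            = 1 - (((1 - r) ^ 2 ^ n : ℝ) : ℂ) ^ 2 := by linear_combination -h'
        rw [this]
        push_cast
        rw [pow_succ 2 n, pow_mul]
    have hG0 : G p ≠ 0 := by
      intro h
      rw [h] at hrdef
      simp [hrdef] at hpos
    have hconj0 : starRingEnd ℂ (G p) ≠ 0 := by simpa using hG0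
    have hΓ : ∀ k, Γ k p = ((1 - (1 - r) ^ 2 ^ k : ℝ) : ℂ) * (starRingEnd ℂ (G p))⁻¹ := by
      intro k
      field_simp
      rw [hz k]
    have habs1 : |1 - r| < 1 := by
      rw [abs_lt]; constructor <;> linarith
    have hpow : Tendsto (fun k : ℕ => (1 - r) ^ 2 ^ k) atTop (nhds 0) :=
      (tendsto_pow_atTop_nhds_zero_of_abs_lt_one habs1).comp
        (tendsto_pow_atTop_atTop_of_one_lt one_lt_two)
    have hlim : Tendsto (fun k : ℕ => ((1 - (1 - r) ^ 2 ^ k : ℝ) : ℂ)) atTop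
        (nhds (((1 : ℝ) : ℂ))) := by
      have h1 : Tendsto (fun k : ℕ => (1 - (1 - r) ^ 2 ^ k : ℝ)) atTop (nhds 1) := by
        simpa using tendsto_const_nhds.sub hpow
      exact (Complex.continuous_ofReal.tendsto 1).comp h1
    have := hlim.mul (tendsto_const_nhds (x := (starRingEnd ℂ (G p))⁻¹))
    simp only [Complex.ofReal_one, one_mul] at this
    refine Tendsto.congr (fun k => (hΓ k).symm) this
  · intro hgt
    set r : ℝ := ‖G p‖ ^ 2 with hrdef
    have hz : ∀ k, Γ k p * starRingEnd ℂ (G p) = ((1 - (1 - r) ^ 2 ^ k : ℝ) : ℂ) := by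
      intro k
      induction k with
      | zero => rw [h0, hGconj p, ← hrdef]; push_cast; ring
      | succ n ih =>
        have := part1 n p
        have h' : 1 - Γ (n + 1) p * starRingEnd ℂ (G p)
            = (((1 - r) ^ 2 ^ n : ℝ) : ℂ) ^ 2 := by
          rw [this, ih]; push_cast; ring
        have : Γ (n + 1) p * starRingEnd ℂ (G p)
            = 1 - (((1 - r) ^ 2 ^ n : ℝ) : ℂ) ^ 2 := by linear_combination -h'
        rw [this]
        push_cast
        rw [pow_succ 2 n, pow_mul]
    have ha : 0 < ‖G p‖ := by
      by_contra h
      push_neg at h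
      have : ‖G p‖ = 0 := le_antisymm h (norm_nonneg _)
      rw [this] at hrdef
      simp [hrdef] at hgt
      linarith
    have habs : ∀ k, ‖Γ k p‖ * ‖G p‖ = |1 - (1 - r) ^ 2 ^ k| := by
      intro k
      have := congrArg (‖·‖) (hz k)
      rw [norm_mul, Complex.norm_conj, Complex.norm_real, Real.norm_eq_abs] at this
      exact this
    have habsΓ : ∀ k, ‖Γ k p‖ = |1 - (1 - r) ^ 2 ^ k| / ‖G p‖ := by
      intro k
      field_simp
      exact habs k
    have hb : 1 < |1 - r| := by
      rw [abs_sub_comm, lt_abs]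
      left; linarith
    have hpow : Tendsto (fun k : ℕ => |1 - r| ^ 2 ^ k) atTop atTop :=
      (tendsto_pow_atTop_atTop_of_one_lt hb).comp
        (tendsto_pow_atTop_atTop_of_one_lt one_lt_two)
    have hnum : Tendsto (fun k : ℕ => |1 - (1 - r) ^ 2 ^ k|) atTop atTop := by
      refine tendsto_atTop_mono' atTop ?_
        (tendsto_atTop_add_const_right atTop (-1) hpow)
      filter_upwards with k
      have h2 : |(1 - r) ^ 2 ^ k| - |(1 : ℝ)| ≤ |(1 - r) ^ 2 ^ k - 1| :=
        abs_sub_abs_le_abs_sub _ _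
      rw [abs_pow] at h2
      calc |1 - r| ^ 2 ^ k + (-1) ≤ |(1 - r) ^ 2 ^ k - 1| := by simpa using h2
        _ = |1 - (1 - r) ^ 2 ^ k| := abs_sub_comm _ _
    have := hnum.atTop_div_const ha
    exact Tendsto.congr (fun k => (habsΓ k).symm) this
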